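/- Suppose V and R satisfy the (P,p,T,t,1)-quadratic Lyapunov inequality with P = 0, p = 0, t = 𝟏 (the all-ones vector in ℝ^m) and T = [C, D, −D; 0, 0, I]ᵀ[0, −½I; −½I, 0][C, D, −D; 0, 0, I] ∈ S^{n+2m}. Let f_i ∈ F_{σ_i,β_i}(H) (i = 1,…,m), let {ξ_k = (x_k,u_k,y_k,F_k)}_{k≥0} be any trajectory of the algorithm (ξ_0 algorithm-consistent, ξ_{k+1} a successor of ξ_k), and let ξ⋆ = (x⋆,u⋆,y⋆,F⋆) be a fixed point satisfying y⋆_1 = … = y⋆_m =: y⋆ and Σ_{i=1}^m u⋆_i = 0. Then, with the Lagrangian L(𝐲,𝐮) = Σ_{i=1}^m f_i(y_i) + Σ_{i=1}^m ⟨u_i, y_m − y_i⟩: (a) for every k, Q(T,(x_k−x⋆,u_k,u⋆)) + tᵀ(F_k−F⋆) = L(y_k,u⋆) − L(y⋆,u_k) = Σ_{i=1}^m ( f_i((y_k)_i) − f_i(y⋆) − ⟨u⋆_i, (y_k)_i⟩ ) ≥ 0; and (b) for every k ≥ 0 the ergodic duality gap satisfies L((1/(k+1))Σ_{j=0}^k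 y_j, u⋆) − L((y⋆,…,y⋆), (1/(k+1))Σ_{j=0}^k u_j) ≤ V(ξ_0,ξ⋆)/(k+1). -/

import Mathlib

open scoped ENNReal
open Matrix

/-- `u` is a subgradient of `f` at `x`: `f z ≥ f x + ⟨u, z - x⟩` for all `z`. -/
def IsSubgradientAt {H : Type*} [NormedAddCommGroup H] [InnerProductSpace ℝ H]
    (f : H → ℝ) (u x : H) : Prop :=
  ∀ z : H, f x + (inner ℝ u (z - x) : ℝ) ≤ f z

/-- `f` is `σ`-strongly convex: `f - (σ/2)‖·‖²` is convex. -/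
def StronglyConvex {H : Type*} [NormedAddCommGroup H] [InnerProductSpace ℝ H]
    (σ : ℝ) (f : H → ℝ) : Prop :=
  ConvexOn ℝ Set.univ (fun x => f x - σ / 2 * ‖x‖ ^ 2)

/-- `f` is `β`-smooth: differentiable with `β`-Lipschitz gradient. -/
def IsSmoothWith {H : Type*} [NormedAddCommGroup H] [InnerProductSpace ℝ H]
    [CompleteSpace H] (β : ℝ) (f : H → ℝ) : Prop :=
  Differentiable ℝ f ∧ ∀ x y : H, ‖gradient f x - gradient f y‖ ≤ β * ‖x - y‖

/-- Membership in the function class `F_{σ,β}(H)`. -/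
def MemFClass {H : Type*} [NormedAddCommGroup H] [InnerProductSpace ℝ H]
    [CompleteSpace H] (σ : ℝ) (β : ℝ≥0∞) (f : H → ℝ) : Prop :=
  StronglyConvex σ f ∧ (β ≠ ⊤ → IsSmoothWith β.toReal f) ∧
    (β = ⊤ → LowerSemicontinuous f)

/-- `(M ⊗ Id) z` for a real matrix `M` acting on tuples of Hilbert-space vectors. -/
def matVecH {H : Type*} [AddCommGroup H] [Module ℝ H] {p q : Type*} [Fintype q]
    (M : Matrix p q ℝ) (z : q → H) : p → H :=
  fun i => ∑ j, M i j • z j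

/-- The point `(x, u, y, F)` is algorithm-consistent for `f`. -/
def AlgConsistent {H : Type*} [NormedAddCommGroup H] [InnerProductSpace ℝ H]
    {n m : ℕ} (C : Matrix (Fin m) (Fin n) ℝ) (D : Matrix (Fin m) (Fin m) ℝ)
    (f : Fin m → H → ℝ) (x : Fin n → H) (u y : Fin m → H) (F : Fin m → ℝ) : Prop :=
  y = matVecH C x + matVecH D u ∧ (∀ i, IsSubgradientAt (f i) (u i) (y i)) ∧
    ∀ i, F i = f i (y i)

/-- `(x, u, y, F)` is a fixed point of the algorithm. -/
def IsFixedPoint {H : Type*} [NormedAddCommGroup H] [InnerProductSpace ℝ H]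
    {n m : ℕ} (A : Matrix (Fin n) (Fin n) ℝ) (B : Matrix (Fin n) (Fin m) ℝ)
    (C : Matrix (Fin m) (Fin n) ℝ) (D : Matrix (Fin m) (Fin m) ℝ)
    (f : Fin m → H → ℝ) (x : Fin n → H) (u y : Fin m → H) (F : Fin m → ℝ) : Prop :=
  x = matVecH A x + matVecH B u ∧ AlgConsistent C D f x u y F

/-- `(xp, up, yp, Fp)` is a successor of an algorithm-consistent point with data `(x, u)`. -/
def IsSuccessor {H : Type*} [NormedAddCommGroup H] [InnerProductSpace ℝ H]
    {n m : ℕ} (A : Matrix (Fin n) (Fin n) ℝ) (B : Matrix (Fin n) (Fin m) ℝ)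
    (C : Matrix (Fin m) (Fin n) ℝ) (D : Matrix (Fin m) (Fin m) ℝ)
    (f : Fin m → H → ℝ) (x : Fin n → H) (u : Fin m → H)
    (xp : Fin n → H) (up yp : Fin m → H) (Fp : Fin m → ℝ) : Prop :=
  xp = matVecH A x + matVecH B u ∧ AlgConsistent C D f xp up yp Fp

/-- The matrix `N = [I_{m−1}; −𝟏ᵀ] ∈ ℝ^{m×(m−1)}`. -/
def Nmat (m : ℕ) : Matrix (Fin m) (Fin (m - 1)) ℝ :=
  Matrix.of fun i j => if (i : ℕ) = (j : ℕ) then 1 else if (i : ℕ) = m - 1 then -1 else 0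

/-- Assumption 1: the range and null-space conditions on `(A, B, C, D)`. -/
def Assumption1 {n m : ℕ} (A : Matrix (Fin n) (Fin n) ℝ) (B : Matrix (Fin n) (Fin m) ℝ)
    (C : Matrix (Fin m) (Fin n) ℝ) (D : Matrix (Fin m) (Fin m) ℝ) : Prop :=
  LinearMap.range (Matrix.fromBlocks (B * Nmat m) 0 (D * Nmat m)
      (Matrix.of fun (_ : Fin m) (_ : Fin 1) => (-1 : ℝ))).mulVecLin ≤
    LinearMap.range (Matrix.fromRows (1 - A) (-C)).mulVecLin ∧
  LinearMap.ker (Matrix.fromCols (1 - A) (-B)).mulVecLin ≤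
    LinearMap.ker (Matrix.fromBlocks ((Nmat m)ᵀ * C) ((Nmat m)ᵀ * D) 0
      (Matrix.of fun (_ : Fin 1) (_ : Fin m) => (1 : ℝ))).mulVecLin

/-- Assumption 2: `D` lower triangular with nonpositive diagonal, and for each `i`
either `β_i < +∞` or `D_{ii} < 0`. -/
def Assumption2 {m : ℕ} (β : Fin m → ℝ≥0∞) (D : Matrix (Fin m) (Fin m) ℝ) : Prop :=
  (∀ i j : Fin m, (i : ℕ) < (j : ℕ) → D i j = 0) ∧ (∀ i, D i i ≤ 0) ∧
    ∀ i, β i ≠ ⊤ ∨ D i i < 0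

/-- Sum inner product quadratic form `Q(M, z) = ⟨z, (M ⊗ Id) z⟩` on `H^ι`. -/
noncomputable def quadFormH {H : Type*} [NormedAddCommGroup H] [InnerProductSpace ℝ H]
    {ι : Type*} [Fintype ι] (M : Matrix ι ι ℝ) (z : ι → H) : ℝ :=
  ∑ i, ∑ j, M i j * (inner ℝ (z i) (z j) : ℝ)

/-- The index set of `ℝ^{n+2m}`, split as `n + m + m`. -/
abbrev StIdx (n m : ℕ) := Fin n ⊕ (Fin m ⊕ Fin m)

/-- The index set of `ℝ^{n+3m-1}`, split as `n + m + m + (m-1)`. -/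
abbrev ColIdx (n m : ℕ) := Fin n ⊕ (Fin m ⊕ (Fin m ⊕ Fin (m - 1)))

/-- The index set of `ℝ^{2m}`. -/
abbrev TwoM (m : ℕ) := Fin m ⊕ Fin m

/-- The index set of `ℝ^{3m}`. -/
abbrev ThreeM (m : ℕ) := Fin 3 × Fin m

/-- The tuple `(x, u, v) ∈ H^{n+2m}`. -/
def tripleH {H : Type*} {n m : ℕ} (x : Fin n → H) (u v : Fin m → H) : StIdx n m → H :=
  Sum.elim x (Sum.elim u v)

/-- The value `Q(Q,(x−x⋆,u,u⋆)) + qᵀ(F−F⋆)` of a quadratic ansatz. -/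
noncomputable def Vval {H : Type*} [NormedAddCommGroup H] [InnerProductSpace ℝ H]
    {n m : ℕ} (Q : Matrix (StIdx n m) (StIdx n m) ℝ) (q : Fin m → ℝ)
    (x : Fin n → H) (u : Fin m → H) (F : Fin m → ℝ)
    (xs : Fin n → H) (us : Fin m → H) (Fs : Fin m → ℝ) : ℝ :=
  quadFormH Q (tripleH (x - xs) u us) + ∑ i, q i * (F i - Fs i)

/-- `V` and `R` (given by `(Q,q)` and `(S,s)`) satisfy the `(P,p,T,t,ρ)`-quadratic
Lyapunov inequality for the algorithm `(A,B,C,D)` over the class determined by `σ, β`. -/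
def QuadLyap {H : Type*} [NormedAddCommGroup H] [InnerProductSpace ℝ H] [CompleteSpace H]
    {n m : ℕ}
    (A : Matrix (Fin n) (Fin n) ℝ) (B : Matrix (Fin n) (Fin m) ℝ)
    (C : Matrix (Fin m) (Fin n) ℝ) (D : Matrix (Fin m) (Fin m) ℝ)
    (σ : Fin m → ℝ) (β : Fin m → ℝ≥0∞)
    (Q S P T : Matrix (StIdx n m) (StIdx n m) ℝ) (q s p t : Fin m → ℝ) (ρ : ℝ) : Prop :=
  -- C1
  (∀ f : Fin m → H → ℝ, (∀ i, MemFClass (σ i) (β i) (f i)) →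
    ∀ x u y F, AlgConsistent C D f x u y F →
    ∀ xp up yp Fp, IsSuccessor A B C D f x u xp up yp Fp →
    ∀ xs us ys Fs, IsFixedPoint A B C D f xs us ys Fs →
      Vval Q q xp up Fp xs us Fs ≤ ρ * Vval Q q x u F xs us Fs - Vval S s x u F xs us Fs) ∧
  -- C2
  (∀ f : Fin m → H → ℝ, (∀ i, MemFClass (σ i) (β i) (f i)) →
    ∀ x u y F, AlgConsistent C D f x u y F →
    ∀ xs us ys Fs, IsFixedPoint A B C D f xs us ys Fs →
      Vval P p x u F xs us Fs ≤ Vval Q q x u F xs us Fs ∧ 0 ≤ Vval P p x u F xs us Fs) ∧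
  -- C3
  (∀ f : Fin m → H → ℝ, (∀ i, MemFClass (σ i) (β i) (f i)) →
    ∀ x u y F, AlgConsistent C D f x u y F →
    ∀ xs us ys Fs, IsFixedPoint A B C D f xs us ys Fs →
      Vval T t x u F xs us Fs ≤ Vval S s x u F xs us Fs ∧ 0 ≤ Vval T t x u F xs us Fs)

/-- Labels `∅`, `+`, `⋆` for points entering the interpolation inequalities. -/
inductive Lbl
  | o : Lbl
  | pl : Lbl
  | st : Lbl
deriving DecidableEq

instance : Fintype Lbl := ⟨{Lbl.o, Lbl.pl, Lbl.st}, by intro x; cases x <;> decide⟩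

/-- A row of four column blocks of sizes `n, m, m, m-1`. -/
def rb4 {n m : ℕ} {r : Type*} (M1 : Matrix r (Fin n) ℝ) (M2 M3 : Matrix r (Fin m) ℝ)
    (M4 : Matrix r (Fin (m - 1)) ℝ) : Matrix r (ColIdx n m) ℝ :=
  Matrix.of fun i => Sum.elim (M1 i) (Sum.elim (M2 i) (Sum.elim (M3 i) (M4 i)))

/-- Stack three `m`-row blocks into a `3m`-row matrix. -/
def stack3 {n m : ℕ} (R1 R2 R3 : Matrix (Fin m) (ColIdx n m) ℝ) :
    Matrix (ThreeM m) (ColIdx n m) ℝ :=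
  Matrix.of fun p => (![R1, R2, R3] p.1) p.2

/-- The matrices `E_{i,j} ∈ ℝ^{3m×(n+3m−1)}` (zero for `i = j`). -/
def Emat {n m : ℕ} (A : Matrix (Fin n) (Fin n) ℝ) (B : Matrix (Fin n) (Fin m) ℝ)
    (C : Matrix (Fin m) (Fin n) ℝ) (D : Matrix (Fin m) (Fin m) ℝ) :
    Lbl → Lbl → Matrix (ThreeM m) (ColIdx n m) ℝ
  | .o, .pl => stack3 (rb4 (C * (1 - A)) (D - C * B) (-D) (C * B * Nmat m))
      (rb4 0 1 0 0) (rb4 0 0 1 0)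
  | .pl, .o => stack3 (rb4 (C * (A - 1)) (C * B - D) D (-(C * B * Nmat m)))
      (rb4 0 0 1 0) (rb4 0 1 0 0)
  | .o, .st => stack3 (rb4 C D 0 (-(D * Nmat m))) (rb4 0 1 0 0) (rb4 0 0 0 (Nmat m))
  | .st, .o => stack3 (rb4 (-C) (-D) 0 (D * Nmat m)) (rb4 0 0 0 (Nmat m)) (rb4 0 1 0 0)
  | .pl, .st => stack3 (rb4 (C * A) (C * B) D (-(D * Nmat m) - C * B * Nmat m))
      (rb4 0 0 1 0) (rb4 0 0 0 (Nmat m))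
  | .st, .pl => stack3 (rb4 (-(C * A)) (-(C * B)) (-D) (D * Nmat m + C * B * Nmat m))
      (rb4 0 0 0 (Nmat m)) (rb4 0 0 1 0)
  | _, _ => 0

/-- The matrices `H_{i,j} ∈ ℝ^{m×2m}` (zero for `i = j`). -/
def Hmat (m : ℕ) : Lbl → Lbl → Matrix (Fin m) (TwoM m) ℝ
  | .o, .pl => Matrix.fromCols 1 (-1)
  | .pl, .o => Matrix.fromCols (-1) 1
  | .o, .st => Matrix.fromCols 1 0
  | .st, .o => Matrix.fromCols (-1) 0
  | .pl, .st => Matrix.fromCols 0 1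
  | .st, .pl => Matrix.fromCols 0 (-1)
  | _, _ => 0

/-- The vector `a_l = −e_l ∈ ℝ^m`. -/
def aVec {m : ℕ} (l : Fin m) : Fin m → ℝ := -(Pi.single l 1)

/-- The interpolation matrices `M_l ∈ S^{3m}`. -/
noncomputable def Mmat {m : ℕ} (σ : Fin m → ℝ) (β : Fin m → ℝ≥0∞) (l : Fin m) :
    Matrix (ThreeM m) (ThreeM m) ℝ :=
  if β l = ⊤ then
    Matrix.kronecker ((1 / 2 : ℝ) • !![σ l, 0, 1; 0, 0, 0; 1, 0, 0])
      (Matrix.diagonal (Pi.single l 1))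
  else
    Matrix.kronecker
      ((1 / (2 * ((β l).toReal - σ l))) •
        !![(β l).toReal * σ l, -σ l, (β l).toReal;
           -σ l, 1, -1;
           (β l).toReal, -1, 1])
      (Matrix.diagonal (Pi.single l 1))

/-- `𝕄_{(l,i,j)} = E_{i,j}ᵀ M_l E_{i,j} ∈ S^{n+3m−1}`. -/
noncomputable def bbM {n m : ℕ} (A : Matrix (Fin n) (Fin n) ℝ) (B : Matrix (Fin n) (Fin m) ℝ)
    (C : Matrix (Fin m) (Fin n) ℝ) (D : Matrix (Fin m) (Fin m) ℝ)
    (σ : Fin m → ℝ) (β : Fin m → ℝ≥0∞) (l : Fin m) (i j : Lbl) :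
    Matrix (ColIdx n m) (ColIdx n m) ℝ :=
  (Emat A B C D i j)ᵀ * Mmat σ β l * Emat A B C D i j

/-- `𝕒_{(l,i,j)} = H_{i,j}ᵀ a_l ∈ ℝ^{2m}`. -/
def bba {m : ℕ} (l : Fin m) (i j : Lbl) : TwoM m → ℝ :=
  (Hmat m i j)ᵀ.mulVec (aVec l)

/-- `Σ_∅ = [I, 0, 0, 0; 0, I, 0, 0; 0, 0, 0, N] ∈ ℝ^{(n+2m)×(n+3m−1)}`. -/
def SigO (n m : ℕ) : Matrix (StIdx n m) (ColIdx n m) ℝ :=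
  Matrix.of (Sum.elim (rb4 1 0 0 0) (Sum.elim (rb4 0 1 0 0) (rb4 0 0 0 (Nmat m))))

/-- `Σ_+ = [A, B, 0, −BN; 0, 0, I, 0; 0, 0, 0, N] ∈ ℝ^{(n+2m)×(n+3m−1)}`. -/
def SigP {n m : ℕ} (A : Matrix (Fin n) (Fin n) ℝ) (B : Matrix (Fin n) (Fin m) ℝ) :
    Matrix (StIdx n m) (ColIdx n m) ℝ :=
  Matrix.of (Sum.elim (rb4 A B 0 (-(B * Nmat m)))
    (Sum.elim (rb4 0 0 1 0) (rb4 0 0 0 (Nmat m))))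

/-- The Lagrangian `L(y,u) = Σᵢ fᵢ(yᵢ) + Σᵢ ⟨uᵢ, y_m − yᵢ⟩` of the consensus
formulation, where `y_m` is the last component. -/
noncomputable def Lagr {H : Type*} [NormedAddCommGroup H] [InnerProductSpace ℝ H]
    {m : ℕ} (hm : 0 < m) (f : Fin m → H → ℝ) (y u : Fin m → H) : ℝ :=
  ∑ i, f i (y i) +
    ∑ i, (inner ℝ (u i) (y ⟨m - 1, Nat.sub_lt hm Nat.one_pos⟩ - y i) : ℝ)

/-- The matrix `[C, D, −D; 0, 0, I] ∈ ℝ^{2m×(n+2m)}`. -/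
def Egap {n m : ℕ} (C : Matrix (Fin m) (Fin n) ℝ) (D : Matrix (Fin m) (Fin m) ℝ) :
    Matrix (TwoM m) (StIdx n m) ℝ :=
  Matrix.of (Sum.elim
    (fun i => Sum.elim (C i) (Sum.elim (D i) ((-D) i)))
    (fun i => Sum.elim 0 (Sum.elim 0 (fun j => if i = j then (1 : ℝ) else 0))))

/-- The matrix `[0, −½I; −½I, 0] ∈ S^{2m}`. -/
noncomputable def Wgap (m : ℕ) : Matrix (TwoM m) (TwoM m) ℝ :=
  Matrix.fromBlocks 0 ((-(1 : ℝ) / 2) • 1) ((-(1 : ℝ) / 2) • 1) 0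

-- AUXILIARY LEMMAS --

lemma my_quadFormH_conj {H : Type*} [NormedAddCommGroup H] [InnerProductSpace ℝ H]
    {ι κ : Type*} [Fintype ι] [Fintype κ] (W : Matrix κ κ ℝ) (N : Matrix κ ι ℝ) (z : ι → H) :
    quadFormH (Nᵀ * W * N) z = quadFormH W (matVecH N z) := by
  simp only [quadFormH, matVecH, Matrix.mul_apply, Matrix.transpose_apply,
    inner_sum, sum_inner, real_inner_smul_left, real_inner_smul_right,
    Finset.mul_sum, Finset.sum_mul]
  conv_lhs => enter [2,x,2,x1]; rw [Finset.sum_comm]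
  conv_lhs => enter [2,x]; rw [Finset.sum_comm]
  conv_lhs => rw [Finset.sum_comm]
  conv_lhs => enter [2,i,2,x]; rw [Finset.sum_comm]
  conv_lhs => enter [2,i]; rw [Finset.sum_comm]
  conv_lhs => enter [2,i,2,x2]; rw [Finset.sum_comm]
  refine Finset.sum_congr rfl fun a _ => Finset.sum_congr rfl fun b _ =>
    Finset.sum_congr rfl fun j _ => Finset.sum_congr rfl fun i _ => ?_
  ring

lemma my_matVecH_sub {H : Type*} [NormedAddCommGroup H] [InnerProductSpace ℝ H]
    {p q : Type*} [Fintype q] (M : Matrix p q ℝ) (a b : q → H) :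
    matVecH M (a - b) = matVecH M a - matVecH M b := by
  funext i; simp [matVecH, smul_sub, Finset.sum_sub_distrib]

lemma my_matVecH_Egap {H : Type*} [NormedAddCommGroup H] [InnerProductSpace ℝ H]
    {n m : ℕ} (C : Matrix (Fin m) (Fin n) ℝ) (D : Matrix (Fin m) (Fin m) ℝ)
    (w : Fin n → H) (u v : Fin m → H) :
    matVecH (Egap C D) (tripleH w u v) =
      Sum.elim (matVecH C w + matVecH D u - matVecH D v) v := by
  funext i
  cases i with
  | inl i =>
    simp [matVecH, Egap, tripleH, Fintype.sum_sum_type, sub_eq_add_neg, add_assoc,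
      Finset.sum_neg_distrib, neg_smul]
  | inr i =>
    simp [matVecH, Egap, tripleH, Fintype.sum_sum_type, Finset.sum_ite_eq]

lemma my_quadFormH_Wgap {H : Type*} [NormedAddCommGroup H] [InnerProductSpace ℝ H]
    {m : ℕ} (v w : Fin m → H) :
    quadFormH (Wgap m) (Sum.elim v w) = -∑ i, (inner ℝ (v i) (w i) : ℝ) := by
  simp only [quadFormH, Wgap, Fintype.sum_sum_type, Sum.elim_inl, Sum.elim_inr,
    Matrix.fromBlocks_apply₁₁, Matrix.fromBlocks_apply₁₂, Matrix.fromBlocks_apply₂₁,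
    Matrix.fromBlocks_apply₂₂, Matrix.zero_apply, Matrix.smul_apply, Matrix.one_apply,
    smul_eq_mul, mul_ite, mul_one, mul_zero, zero_mul, ite_mul, Finset.sum_ite_eq,
    Finset.mem_univ, if_true, Finset.sum_const_zero, zero_add, add_zero]
  rw [← Finset.sum_add_distrib, ← Finset.sum_neg_distrib]
  refine Finset.sum_congr rfl fun i _ => ?_
  rw [real_inner_comm (w i) (v i)]
  ring

lemma my_convexOn_normsq {H : Type*} [NormedAddCommGroup H] [InnerProductSpace ℝ H]
    {c : ℝ} (hc : 0 ≤ c) : ConvexOn ℝ Set.univ (fun x : H => c * ‖x‖ ^ 2) := by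
  refine ⟨convex_univ, fun x _ y _ a b ha hb hab => ?_⟩
  simp only [smul_eq_mul]
  have e1 : ‖a • x + b • y‖ ^ 2 =
      a^2 * ‖x‖^2 + 2 * (a * b * (inner ℝ x y : ℝ)) + b^2 * ‖y‖^2 := by
    rw [@norm_add_sq_real]
    simp [norm_smul, real_inner_smul_left, real_inner_smul_right, mul_pow, sq_abs]
    ring
  have e2 : (0:ℝ) ≤ ‖x - y‖ ^ 2 := sq_nonneg _
  rw [@norm_sub_sq_real] at e2
  have hb' : b = 1 - a := by linarith
  subst hb'
  rw [e1]
  nlinarith [mul_nonneg hc (mul_nonneg (mul_nonneg ha hb) e2)]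

lemma my_convexOn_of_sc {H : Type*} [NormedAddCommGroup H] [InnerProductSpace ℝ H]
    {σ : ℝ} {f : H → ℝ} (h : StronglyConvex σ f) (hσ : 0 ≤ σ) :
    ConvexOn ℝ Set.univ f := by
  have h2 := h.add (my_convexOn_normsq (H := H) (c := σ / 2) (by linarith))
  have he : ((fun x : H => f x - σ / 2 * ‖x‖ ^ 2) + fun x : H => σ / 2 * ‖x‖ ^ 2) = f := by
    funext x; simp
  rwa [he] at h2

/-- Duality gap convergence from a `(0,0,T,𝟏,1)`-quadratic Lyapunov inequality with
`T = [C,D,−D;0,0,I]ᵀ[0,−½I;−½I,0][C,D,−D;0,0,I]`: along any trajectory the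
residual lower bound equals the duality gap, and the ergodic duality gap decays
like `V(ξ_0,ξ⋆)/(k+1)`. -/
theorem quadLyap_duality_gap
    {H : Type*} [NormedAddCommGroup H] [InnerProductSpace ℝ H] [CompleteSpace H]
    {n m : ℕ} (hn : 1 ≤ n) (hm : 0 < m)
    (A : Matrix (Fin n) (Fin n) ℝ) (B : Matrix (Fin n) (Fin m) ℝ)
    (C : Matrix (Fin m) (Fin n) ℝ) (D : Matrix (Fin m) (Fin m) ℝ)
    (σ : Fin m → ℝ) (β : Fin m → ℝ≥0∞)
    (hσβ : ∀ i, 0 ≤ σ i ∧ ENNReal.ofReal (σ i) < β i)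
    (Q S : Matrix (StIdx n m) (StIdx n m) ℝ) (q s : Fin m → ℝ)
    (hLyap : QuadLyap (H := H) A B C D σ β Q S 0 ((Egap C D)ᵀ * Wgap m * Egap C D)
      q s 0 (fun _ => 1) 1)
    (f : Fin m → H → ℝ) (hf : ∀ i, MemFClass (σ i) (β i) (f i))
    (x : ℕ → Fin n → H) (u y : ℕ → Fin m → H) (F : ℕ → Fin m → ℝ)
    (htraj0 : AlgConsistent C D f (x 0) (u 0) (y 0) (F 0))
    (htraj : ∀ k : ℕ,
      IsSuccessor A B C D f (x k) (u k) (x (k + 1)) (u (k + 1)) (y (k + 1)) (F (k + 1)))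
    (xs : Fin n → H) (us ys : Fin m → H) (Fs : Fin m → ℝ)
    (hfix : IsFixedPoint A B C D f xs us ys Fs)
    (hys : ∀ i j, ys i = ys j) (hus : ∑ i, us i = 0) :
    -- (a) the residual lower bound is the duality gap and is nonnegative
    (∀ k : ℕ,
      Vval ((Egap C D)ᵀ * Wgap m * Egap C D) (fun _ => 1) (x k) (u k) (F k) xs us Fs =
          Lagr hm f (y k) us - Lagr hm f ys (u k) ∧
      Lagr hm f (y k) us - Lagr hm f ys (u k) =
          ∑ i, (f i (y k i) - f i (ys i) - (inner ℝ (us i) (y k i) : ℝ)) ∧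
      0 ≤ Lagr hm f (y k) us - Lagr hm f ys (u k)) ∧
    -- (b) ergodic O(1/k) convergence of the duality gap
    (∀ k : ℕ,
      Lagr hm f (fun i => (1 / (k + 1 : ℝ)) • ∑ j ∈ Finset.range (k + 1), y j i) us -
          Lagr hm f ys (fun i => (1 / (k + 1 : ℝ)) • ∑ j ∈ Finset.range (k + 1), u j i) ≤
        Vval Q q (x 0) (u 0) (F 0) xs us Fs / (k + 1 : ℝ)) := by
  obtain ⟨hC1, hC2, hC3⟩ := hLyap
  have hfixc : AlgConsistent C D f xs us ys Fs := hfix.2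
  have cons : ∀ k, AlgConsistent C D f (x k) (u k) (y k) (F k) := by
    intro k
    cases k with
    | zero => exact htraj0
    | succ k => exact (htraj k).2
  have fact1 : ∀ z : H, ∑ i, (inner ℝ (us i) z : ℝ) = 0 := by
    intro z
    rw [← sum_inner, hus, inner_zero_left]
  have fact4 : ∑ i, (inner ℝ (us i) (ys i) : ℝ) = 0 := by
    have h0 : ∀ i : Fin m, (inner ℝ (us i) (ys i) : ℝ)
        = (inner ℝ (us i) (ys ⟨m - 1, Nat.sub_lt hm Nat.one_pos⟩) : ℝ) := by
      intro i; rw [hys i]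
    rw [Finset.sum_congr rfl fun i _ => h0 i]
    exact fact1 _
  have lagrUS : ∀ Y : Fin m → H,
      Lagr hm f Y us = ∑ i, (f i (Y i) - (inner ℝ (us i) (Y i) : ℝ)) := by
    intro Y
    unfold Lagr
    simp only [inner_sub_right]
    rw [Finset.sum_sub_distrib, fact1, Finset.sum_sub_distrib]
    ring
  have lagrYS : ∀ U : Fin m → H, Lagr hm f ys U = ∑ i, f i (ys i) := by
    intro U
    unfold Lagr
    have h0 : ∀ i : Fin m, ys ⟨m - 1, Nat.sub_lt hm Nat.one_pos⟩ - ys i = 0 :=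
      fun i => sub_eq_zero_of_eq (hys _ _)
    simp [h0]
  have keyGap : ∀ (Y U : Fin m → H),
      Lagr hm f Y us - Lagr hm f ys U
        = ∑ i, (f i (Y i) - f i (ys i) - (inner ℝ (us i) (Y i) : ℝ)) := by
    intro Y U
    rw [lagrUS, lagrYS, ← Finset.sum_sub_distrib]
    exact Finset.sum_congr rfl fun i _ => by ring
  have VvalT : ∀ (X : Fin n → H) (U : Fin m → H) (Fv : Fin m → ℝ) (Y : Fin m → H),
      Y = matVecH C X + matVecH D U →
      Vval ((Egap C D)ᵀ * Wgap m * Egap C D) (fun _ => 1) X U Fv xs us Fs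
        = ∑ i, (Fv i - Fs i) - ∑ i, (inner ℝ (Y i - ys i) (us i) : ℝ) := by
    intro X U Fv Y hY
    unfold Vval
    rw [my_quadFormH_conj, my_matVecH_Egap]
    have hE : matVecH C (X - xs) + matVecH D U - matVecH D us = fun i => Y i - ys i := by
      funext i
      rw [my_matVecH_sub, hY, hfixc.1]
      simp only [Pi.add_apply, Pi.sub_apply]
      abel
    rw [hE, my_quadFormH_Wgap]
    simp only [one_mul]
    ring
  have keyA : ∀ k : ℕ,
      Vval ((Egap C D)ᵀ * Wgap m * Egap C D) (fun _ => 1) (x k) (u k) (F k) xs us Fs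
        = ∑ i, (f i (y k i) - f i (ys i) - (inner ℝ (us i) (y k i) : ℝ)) := by
    intro k
    rw [VvalT (x k) (u k) (F k) (y k) (cons k).1]
    have e1 : ∀ i, F k i - Fs i = f i (y k i) - f i (ys i) := fun i => by
      rw [(cons k).2.2 i, hfixc.2.2 i]
    have e2 : ∀ i : Fin m, (inner ℝ (y k i - ys i) (us i) : ℝ)
        = (inner ℝ (us i) (y k i) : ℝ) - (inner ℝ (us i) (ys i) : ℝ) := fun i => by
      rw [real_inner_comm, inner_sub_right]
    rw [Finset.sum_congr rfl fun i _ => e1 i, Finset.sum_congr rfl fun i _ => e2 i]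
    have e3 : ∑ i, ((inner ℝ (us i) (y k i) : ℝ) - (inner ℝ (us i) (ys i) : ℝ))
        = ∑ i, (inner ℝ (us i) (y k i) : ℝ) := by
      rw [Finset.sum_sub_distrib, fact4, sub_zero]
    rw [e3, ← Finset.sum_sub_distrib]
  have keyNonneg : ∀ Y : Fin m → H,
      0 ≤ ∑ i, (f i (Y i) - f i (ys i) - (inner ℝ (us i) (Y i) : ℝ)) := by
    intro Y
    have e : ∑ i, (f i (Y i) - f i (ys i) - (inner ℝ (us i) (Y i) : ℝ))
        = ∑ i, (f i (Y i) - f i (ys i) - (inner ℝ (us i) (Y i - ys i) : ℝ))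
          - ∑ i, (inner ℝ (us i) (ys i) : ℝ) := by
      rw [← Finset.sum_sub_distrib]
      exact Finset.sum_congr rfl fun i _ => by rw [inner_sub_right]; ring
    rw [e, fact4, sub_zero]
    refine Finset.sum_nonneg fun i _ => ?_
    have := hfixc.2.1 i (Y i)
    linarith
  constructor
  · intro k
    refine ⟨?_, keyGap (y k) (u k), ?_⟩
    · rw [keyA k, keyGap (y k) (u k)]
    · rw [keyGap (y k) (u k)]; exact keyNonneg (y k)
  · intro k
    have hVle : ∀ j : ℕ,
        Vval Q q (x (j+1)) (u (j+1)) (F (j+1)) xs us Fs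
          ≤ Vval Q q (x j) (u j) (F j) xs us Fs
            - Vval S s (x j) (u j) (F j) xs us Fs := by
      intro j
      have := hC1 f hf (x j) (u j) (y j) (F j) (cons j) (x (j+1)) (u (j+1)) (y (j+1))
        (F (j+1)) (htraj j) xs us ys Fs hfix
      simpa using this
    have hTS : ∀ j : ℕ,
        Vval ((Egap C D)ᵀ * Wgap m * Egap C D) (fun _ => 1) (x j) (u j) (F j) xs us Fs
          ≤ Vval S s (x j) (u j) (F j) xs us Fs := fun j =>
      (hC3 f hf (x j) (u j) (y j) (F j) (cons j) xs us ys Fs hfix).1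
    have hQnn : ∀ j : ℕ, 0 ≤ Vval Q q (x j) (u j) (F j) xs us Fs := fun j =>
      le_trans (hC2 f hf (x j) (u j) (y j) (F j) (cons j) xs us ys Fs hfix).2
        (hC2 f hf (x j) (u j) (y j) (F j) (cons j) xs us ys Fs hfix).1
    have tele : ∀ N : ℕ,
        ∑ j ∈ Finset.range (N+1),
            Vval ((Egap C D)ᵀ * Wgap m * Egap C D) (fun _ => 1) (x j) (u j) (F j) xs us Fs
          + Vval Q q (x (N+1)) (u (N+1)) (F (N+1)) xs us Fs
          ≤ Vval Q q (x 0) (u 0) (F 0) xs us Fs := by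
      intro N
      induction N with
      | zero =>
        rw [Finset.sum_range_succ, Finset.sum_range_zero]
        linarith [hVle 0, hTS 0]
      | succ N ih =>
        rw [Finset.sum_range_succ]
        linarith [hVle (N+1), hTS (N+1)]
    have bound : ∑ j ∈ Finset.range (k+1),
        (∑ i, (f i (y j i) - f i (ys i) - (inner ℝ (us i) (y j i) : ℝ)))
          ≤ Vval Q q (x 0) (u 0) (F 0) xs us Fs := by
      have h1 := tele k
      have h2 := hQnn (k+1)
      rw [Finset.sum_congr rfl fun j _ => (keyA j).symm]
      linarith
    have hK : (0:ℝ) < (k:ℝ) + 1 := by positivity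
    rw [keyGap]
    have const_sum : ∀ r : ℝ, ∑ _j ∈ Finset.range (k+1), (1/((k:ℝ)+1)) * r = r := by
      intro r
      rw [Finset.sum_const, Finset.card_range, nsmul_eq_mul]
      push_cast
      field_simp
    have jensen : ∀ i : Fin m,
        f i ((1 / ((k:ℝ) + 1)) • ∑ j ∈ Finset.range (k + 1), y j i)
          ≤ ∑ j ∈ Finset.range (k + 1), (1 / ((k:ℝ) + 1)) * f i (y j i) := by
      intro i
      have hconv := my_convexOn_of_sc (hf i).1 (hσβ i).1
      have h1 : ∑ _j ∈ Finset.range (k + 1), (1 / ((k:ℝ) + 1)) = 1 := by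
        simpa using const_sum 1
      have h2 := hconv.map_sum_le (w := fun _ => 1 / ((k:ℝ) + 1))
        (p := fun j => y j i) (fun j _ => by positivity) h1 (fun j _ => Set.mem_univ _)
      rw [← Finset.smul_sum] at h2
      simpa using h2
    have inner_avg : ∀ i : Fin m,
        (inner ℝ (us i) ((1 / ((k:ℝ) + 1)) • ∑ j ∈ Finset.range (k + 1), y j i) : ℝ)
          = ∑ j ∈ Finset.range (k + 1), (1 / ((k:ℝ) + 1)) * (inner ℝ (us i) (y j i) : ℝ) := by
      intro i
      rw [real_inner_smul_right, inner_sum, Finset.mul_sum]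
    have step1 : ∑ i, (f i ((1 / ((k:ℝ) + 1)) • ∑ j ∈ Finset.range (k + 1), y j i)
          - f i (ys i)
          - (inner ℝ (us i) ((1 / ((k:ℝ) + 1)) • ∑ j ∈ Finset.range (k + 1), y j i) : ℝ))
        ≤ ∑ i, (∑ j ∈ Finset.range (k + 1),
            (1/((k:ℝ)+1)) * (f i (y j i) - f i (ys i) - (inner ℝ (us i) (y j i) : ℝ))) := by
      refine Finset.sum_le_sum fun i _ => ?_
      have hsplit : ∑ j ∈ Finset.range (k+1),
          (1/((k:ℝ)+1)) * (f i (y j i) - f i (ys i) - (inner ℝ (us i) (y j i) : ℝ))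
          = ∑ j ∈ Finset.range (k+1), (1/((k:ℝ)+1)) * f i (y j i)
            - f i (ys i)
            - ∑ j ∈ Finset.range (k+1), (1/((k:ℝ)+1)) * (inner ℝ (us i) (y j i) : ℝ) := by
        calc ∑ j ∈ Finset.range (k+1),
            (1/((k:ℝ)+1)) * (f i (y j i) - f i (ys i) - (inner ℝ (us i) (y j i) : ℝ))
            = ∑ j ∈ Finset.range (k+1), ((1/((k:ℝ)+1)) * f i (y j i)
              - (1/((k:ℝ)+1)) * f i (ys i)
              - (1/((k:ℝ)+1)) * (inner ℝ (us i) (y j i) : ℝ)) :=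
              Finset.sum_congr rfl fun j _ => by ring
          _ = ∑ j ∈ Finset.range (k+1), (1/((k:ℝ)+1)) * f i (y j i)
              - ∑ _j ∈ Finset.range (k+1), (1/((k:ℝ)+1)) * f i (ys i)
              - ∑ j ∈ Finset.range (k+1), (1/((k:ℝ)+1)) * (inner ℝ (us i) (y j i) : ℝ) := by
              rw [Finset.sum_sub_distrib, Finset.sum_sub_distrib]
          _ = _ := by rw [const_sum]
      rw [hsplit, inner_avg i]
      linarith [jensen i]
    have step2 : ∑ i, (∑ j ∈ Finset.range (k + 1),
          (1/((k:ℝ)+1)) * (f i (y j i) - f i (ys i) - (inner ℝ (us i) (y j i) : ℝ)))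
        = (1/((k:ℝ)+1)) * ∑ j ∈ Finset.range (k+1),
            (∑ i, (f i (y j i) - f i (ys i) - (inner ℝ (us i) (y j i) : ℝ))) := by
      rw [Finset.sum_comm, Finset.mul_sum]
      exact Finset.sum_congr rfl fun j _ => by rw [Finset.mul_sum]
    calc ∑ i, (f i ((1 / ((k:ℝ) + 1)) • ∑ j ∈ Finset.range (k + 1), y j i)
            - f i (ys i)
            - (inner ℝ (us i) ((1 / ((k:ℝ) + 1)) • ∑ j ∈ Finset.range (k + 1), y j i) : ℝ))
        ≤ (1/((k:ℝ)+1)) * ∑ j ∈ Finset.range (k+1),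
            (∑ i, (f i (y j i) - f i (ys i) - (inner ℝ (us i) (y j i) : ℝ))) := by
          rw [← step2]; exact step1
      _ ≤ (1/((k:ℝ)+1)) * Vval Q q (x 0) (u 0) (F 0) xs us Fs := by
          have := bound
          have h1 : (0:ℝ) ≤ 1/((k:ℝ)+1) := by positivity
          exact mul_le_mul_of_nonneg_left this h1
      _ = Vval Q q (x 0) (u 0) (F 0) xs us Fs / ((k:ℝ)+1) := by ring
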